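/- For the planar point set P = {(0,z) : z ∈ ℤ} ∪ {(1,0)}, every point q ∈ P \ {(1,0)} is Voronoi relevant for a = (1,0); consequently the Voronoi cell V(a) is not a polyhedron (it is not the intersection of finitely many closed half-spaces). -/

import Mathlib

open scoped RealInnerProductSpace
open Set

noncomputable section

abbrev E (n : ℕ) := EuclideanSpace ℝ (Fin n)

/-- `P` is discrete: every bounded set contains only finitely many points of `P`. -/
def IsDiscreteP {n : ℕ} (P : Set (E n)) : Prop :=
  ∀ B : Set (E n), Bornology.IsBounded B → (P ∩ B).Finite

/-- The Voronoi cell of `p` relative to `P`. -/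
def voronoiCell {n : ℕ} (P : Set (E n)) (p : E n) : Set (E n) :=
  {x | ∀ q ∈ P, dist x p ≤ dist x q}

/-- A polyhedron: a finite intersection of closed half-spaces. -/
def IsPolyhedron {n : ℕ} (S : Set (E n)) : Prop :=
  ∃ (k : ℕ) (y : Fin k → E n) (α : Fin k → ℝ),
    S = ⋂ i, {x : E n | (inner ℝ x (y i) : ℝ) ≤ α i}

/-- A polytope: a bounded polyhedron. -/
def IsPolytope {n : ℕ} (S : Set (E n)) : Prop :=
  IsPolyhedron S ∧ Bornology.IsBounded S

/-- The half-space of points at least as close to `p` as to `q`. -/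
def halfSpace {n : ℕ} (p q : E n) : Set (E n) :=
  {x : E n | (inner ℝ (x - p) (q - p) : ℝ) ≤ (1/2) * ‖q - p‖^2}

/-- The conic hull: all nonnegative combinations of finitely many elements of `M`. -/
def coneHull {n : ℕ} (M : Set (E n)) : Set (E n) :=
  {x | ∃ (k : ℕ) (v : Fin k → E n) (c : Fin k → ℝ),
    (∀ i, v i ∈ M) ∧ (∀ i, 0 ≤ c i) ∧ x = ∑ i, c i • v i}

/-- The direction cone of `p`: the conic hull of `P - p`. -/
def dirCone {n : ℕ} (P : Set (E n)) (p : E n) : Set (E n) :=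
  coneHull ((fun q => q - p) '' P)

/-- A cone is finitely generated if it is the conic hull of finitely many vectors. -/
def FinitelyGeneratedCone {n : ℕ} (C : Set (E n)) : Prop :=
  ∃ (k : ℕ) (v : Fin k → E n), C = coneHull (Set.range v)

/-- `q` is Voronoi relevant for `p`: dropping `halfSpace p q` strictly enlarges the
intersection defining the Voronoi cell. -/
def VoronoiRelevant {n : ℕ} (P : Set (E n)) (p q : E n) : Prop :=
  (⋂ r ∈ P \ {p}, halfSpace p r) ⊂ ⋂ r ∈ P \ {p, q}, halfSpace p r

/-- The point `(x, y)` in the Euclidean plane. -/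
def e2 (x y : ℝ) : E 2 := (WithLp.equiv 2 (Fin 2 → ℝ)).symm ![x, y]

lemma inner_E2 (u v : E 2) : (inner ℝ u v : ℝ) = u 0 * v 0 + u 1 * v 1 := by
  simp [PiLp.inner_apply, RCLike.inner_apply, Fin.sum_univ_two, mul_comm]

lemma sub_apply' (u v : E 2) (i : Fin 2) : (u - v) i = u i - v i := rfl

lemma normsq_E2 (u : E 2) : ‖u‖^2 = u 0 ^2 + u 1 ^2 := by
  rw [← real_inner_self_eq_norm_sq, inner_E2]; ring

lemma e2_fst (x y : ℝ) : (e2 x y) 0 = x := rfl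
lemma e2_snd (x y : ℝ) : (e2 x y) 1 = y := rfl

lemma mem_halfSpace (p q x : E 2) :
    x ∈ halfSpace p q ↔ (x 0 - p 0) * (q 0 - p 0) + (x 1 - p 1) * (q 1 - p 1)
      ≤ (1/2) * ((q 0 - p 0)^2 + (q 1 - p 1)^2) := by
  unfold halfSpace
  rw [Set.mem_setOf_eq, inner_E2, normsq_E2]
  simp only [sub_apply']

lemma dist_le_dist' (x p q : E 2) :
    dist x p ≤ dist x q ↔ (x 0 - p 0)^2 + (x 1 - p 1)^2 ≤ (x 0 - q 0)^2 + (x 1 - q 1)^2 := by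
  rw [dist_eq_norm, dist_eq_norm,
    ← pow_le_pow_iff_left₀ (norm_nonneg _) (norm_nonneg _) two_ne_zero,
    normsq_E2, normsq_E2]
  simp only [sub_apply']

lemma part1 : ∀ q ∈ (({x | ∃ z : ℤ, x = e2 0 z} ∪ {e2 1 0}) : Set (E 2)) \ {e2 1 0},
      VoronoiRelevant ({x | ∃ z : ℤ, x = e2 0 z} ∪ {e2 1 0}) (e2 1 0) q := by
  set P : Set (E 2) := {x | ∃ z : ℤ, x = e2 0 z} ∪ {e2 1 0} with hP
  rintro q ⟨hqP, hqa⟩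
  have hqa' : q ≠ e2 1 0 := by simpa using hqa
  obtain ⟨z, rfl⟩ : ∃ z : ℤ, q = e2 0 (z : ℝ) := by
    rcases hqP with h | h
    · exact h
    · exact absurd (by simpa using h) hqa'
  -- the witness point
  set xw : E 2 := e2 ((z:ℝ)^2/2 + 1/4) z with hxw
  have hxwB : xw ∈ ⋂ r ∈ P \ {e2 1 0, e2 0 (z:ℝ)}, halfSpace (e2 1 0) r := by
    simp only [Set.mem_iInter]
    rintro r ⟨hrP, hrn⟩
    simp only [Set.mem_insert_iff, Set.mem_singleton_iff, not_or] at hrn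
    obtain ⟨hra, hrq⟩ := hrn
    obtain ⟨w, rfl⟩ : ∃ w : ℤ, r = e2 0 (w : ℝ) := by
      rcases hrP with h | h
      · exact h
      · exact absurd (by simpa using h) hra
    have hwz : w ≠ z := by
      intro h; exact hrq (by rw [h])
    have h1 : (1:ℝ) ≤ ((z:ℝ) - w)^2 := by
      have := Int.one_le_abs (sub_ne_zero.mpr (Ne.symm hwz))
      have h2 : (1:ℤ) ≤ (z - w)^2 := by nlinarith [sq_abs (z - w)]
      exact_mod_cast h2
    rw [mem_halfSpace]
    simp only [hxw, e2_fst, e2_snd]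
    nlinarith
  have hxwA : xw ∉ ⋂ r ∈ P \ {e2 1 0}, halfSpace (e2 1 0) r := by
    simp only [Set.mem_iInter, not_forall]
    refine ⟨e2 0 (z:ℝ), ⟨Or.inl ⟨z, rfl⟩, ?_⟩, ?_⟩
    · simp only [Set.mem_singleton_iff]
      intro h
      have : (0:ℝ) = 1 := congrArg (fun u : E 2 => u 0) h
      norm_num at this
    · rw [mem_halfSpace]
      simp only [hxw, e2_fst, e2_snd]
      intro h; nlinarith
  rw [VoronoiRelevant, Set.ssubset_def]
  constructor
  · exact Set.biInter_subset_biInter_left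
      (Set.diff_subset_diff_right (by simp [Set.singleton_subset_iff]))
  · intro h
    exact hxwA (h hxwB)

lemma part2 : ¬ IsPolyhedron (voronoiCell ({x | ∃ z : ℤ, x = e2 0 z} ∪ {e2 1 0}) (e2 1 0)) := by
  set P : Set (E 2) := {x | ∃ z : ℤ, x = e2 0 z} ∪ {e2 1 0} with hP
  rintro ⟨k, y, α, hEq⟩
  set a : E 2 := e2 1 0 with ha
  -- boundary points (in the cell) and violating points (not in the cell)
  set b : ℤ → E 2 := fun z => e2 ((z:ℝ)^2/2 + 1/2) z with hbdef
  set w : ℤ → E 2 := fun z => e2 ((z:ℝ)^2/2 + 1/4) z with hwdef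
  have hb : ∀ z : ℤ, b z ∈ voronoiCell P a := by
    intro z q hqP
    rcases hqP with h | h
    · obtain ⟨v, rfl⟩ := h
      rw [dist_le_dist']
      simp only [hbdef, ha, e2_fst, e2_snd]
      nlinarith [sq_nonneg ((z:ℝ) - v)]
    · simp only [Set.mem_singleton_iff] at h
      rw [h]
  have hw : ∀ z : ℤ, w z ∉ voronoiCell P a := by
    intro z hmem
    have := hmem (e2 0 (z:ℝ)) (Or.inl ⟨z, rfl⟩)
    rw [dist_le_dist'] at this
    simp only [hwdef, ha, e2_fst, e2_snd] at this
    nlinarith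
  -- choose a violated constraint for each z
  have hgex : ∀ z : ℤ, ∃ i : Fin k, α i < (inner ℝ (w z) (y i) : ℝ) := by
    intro z
    have := hw z
    rw [hEq] at this
    simp only [Set.mem_iInter, Set.mem_setOf_eq, not_forall, not_le] at this
    exact this
  choose g hg using hgex
  obtain ⟨i, hi⟩ := Finite.exists_infinite_fiber g
  have hS : (g ⁻¹' {i}).Infinite := Set.infinite_coe_iff.mp hi
  have hbH : ∀ z : ℤ, (inner ℝ (b z) (y i) : ℝ) ≤ α i := by
    intro z
    have := hb z
    rw [hEq] at this
    simp only [Set.mem_iInter, Set.mem_setOf_eq] at this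
    exact this i
  -- y i 0 < 0
  obtain ⟨z₀, hz₀⟩ := hS.nonempty
  have hgz₀ : g z₀ = i := hz₀
  have hy0 : y i 0 < 0 := by
    have h1 := hg z₀
    rw [hgz₀] at h1
    have h2 := hbH z₀
    rw [inner_E2] at h1 h2
    simp only [hbdef, hwdef, e2_fst, e2_snd] at h1 h2
    nlinarith
  -- choose a large z in the fiber
  set M : ℝ := (2*(|y i 1| + |α i| + |y i 0| + 1))/(-(y i 0)) with hM
  set N : ℕ := ⌈M⌉₊ with hN
  obtain ⟨z, hzS, hzN⟩ : ∃ z ∈ g ⁻¹' {i}, (N:ℤ) < |z| := by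
    by_contra h
    push_neg at h
    refine hS ((Set.finite_Icc (-(N:ℤ)) N).subset ?_)
    intro z hz
    exact Set.mem_Icc.mpr (abs_le.mp (h z hz))
  have hgz : g z = i := hzS
  have h1 := hg z
  rw [hgz, inner_E2] at h1
  simp only [hwdef, e2_fst, e2_snd] at h1
  have hy0' : (0:ℝ) < -(y i 0) := by linarith
  have hMeq : M * (-(y i 0)) = 2*(|y i 1| + |α i| + |y i 0| + 1) :=
    div_mul_cancel₀ _ (ne_of_gt hy0')
  have hMz : M ≤ |(z:ℝ)| := by
    calc M ≤ N := Nat.le_ceil M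
    _ ≤ |(z:ℝ)| := by
        rw [← Int.cast_abs]
        exact_mod_cast hzN.le
  have h1z : (1:ℝ) ≤ |(z:ℝ)| := by
    rw [← Int.cast_abs]
    have h0 : (0:ℤ) < |z| := lt_of_le_of_lt (Int.natCast_nonneg N) hzN
    exact_mod_cast h0
  have f1 : (z:ℝ) * y i 1 ≤ |(z:ℝ)| * |y i 1| := (le_abs_self _).trans_eq (abs_mul _ _)
  have f3 : ((z:ℝ))^2 = |(z:ℝ)|^2 := (sq_abs _).symm
  have f4 := mul_le_mul_of_nonneg_right hMz hy0'.le
  have f5 := mul_le_mul_of_nonneg_left f4 (abs_nonneg (z:ℝ))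
  have f6 := mul_le_mul_of_nonneg_right h1z
    (show (0:ℝ) ≤ |α i| + |y i 0| + 1 by positivity)
  nlinarith [neg_abs_le (α i), abs_nonneg (y i 0), abs_nonneg (y i 1), abs_nonneg (z:ℝ)]

theorem stmt0 :
    (∀ q ∈ (({x | ∃ z : ℤ, x = e2 0 z} ∪ {e2 1 0}) : Set (E 2)) \ {e2 1 0},
      VoronoiRelevant ({x | ∃ z : ℤ, x = e2 0 z} ∪ {e2 1 0}) (e2 1 0) q) ∧
    ¬ IsPolyhedron (voronoiCell ({x | ∃ z : ℤ, x = e2 0 z} ∪ {e2 1 0}) (e2 1 0)) :=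
  ⟨part1, part2⟩
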